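/- Let G=(V,E) be a finite simple graph on n vertices and let k be an integer with 1 ≤ k < n. Construct the graph G'=(V',E') as follows: V' contains a copy v' of every vertex v ∈ V, a vertex e_{uv} for every edge {u,v} ∈ E adjacent exactly to u' and v', and k+1 additional vertices x_1, …, x_{k+1}, each adjacent exactly to all n copy vertices; equip G' with unanimity thresholds, i.e., thr(x) = deg_{G'}(x) for every x ∈ V'. Then the maximum of |σ(S')| over all S' ⊆ V' with |S'| ≤ k equals the maximum number of edges of an induced subgraph of G on at most k vertices. -/

import Mathlib

open scoped Classical
set_option linter.unusedSectionVars false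

variable {V : Type*} [Fintype V]

/-- The open neighborhood of `v` as a `Finset`. -/
noncomputable def nbr (G : SimpleGraph V) (v : V) : Finset V :=
  Finset.univ.filter fun w => G.Adj v w

/-- The degree of a vertex. -/
noncomputable def deg (G : SimpleGraph V) (v : V) : ℕ := (nbr G v).card

/-- One round of the activation process: active vertices stay active and every vertex
having at least `thr v` active neighbors becomes active. -/
noncomputable def actStep (G : SimpleGraph V) (thr : V → ℕ) (A : Finset V) : Finset V :=
  A ∪ Finset.univ.filter fun v => thr v ≤ (nbr G v ∩ A).card

/-- `sigmaCl G thr S` = σ[S], the set of vertices active at the end of the activation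
process started with seed set `S` (iterating `|V|` rounds suffices to stabilize). -/
noncomputable def sigmaCl (G : SimpleGraph V) (thr : V → ℕ) (S : Finset V) : Finset V :=
  (actStep G thr)^[Fintype.card V] S

/-- `sigmaOp G thr S` = σ(S) = σ[S] \ S, the open activated set. -/
noncomputable def sigmaOp (G : SimpleGraph V) (thr : V → ℕ) (S : Finset V) : Finset V :=
  sigmaCl G thr S \ S

/-- The densest-k-subgraph reduction graph: a copy `Sum.inl v` of every vertex of G, an
edge-vertex `Sum.inr (Sum.inl e)` for every edge e of G adjacent exactly to the copies
of its two endpoints, and k+1 vertices `Sum.inr (Sum.inr i)` each adjacent exactly to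
all copy vertices. -/
noncomputable def dksRed (G : SimpleGraph V) (k : ℕ) :
    SimpleGraph (V ⊕ (G.edgeSet ⊕ Fin (k + 1))) :=
  SimpleGraph.fromRel fun x y =>
    (∃ (e : G.edgeSet) (v : V),
      x = Sum.inl v ∧ y = Sum.inr (Sum.inl e) ∧ v ∈ (e : Sym2 V)) ∨
    (∃ (i : Fin (k + 1)) (v : V), x = Sum.inl v ∧ y = Sum.inr (Sum.inr i))


lemma card_le_card_inter_iff {α : Type*} [DecidableEq α] (s A : Finset α) :
    s.card ≤ (s ∩ A).card ↔ s ⊆ A := by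
  constructor
  · intro h
    exact Finset.inter_eq_left.mp (Finset.eq_of_subset_of_card_le Finset.inter_subset_left h)
  · intro h
    rw [Finset.inter_eq_left.mpr h]

lemma mem_actStep_unanimity (G : SimpleGraph V) (A : Finset V) (v : V) :
    v ∈ actStep G (deg G) A ↔ v ∈ A ∨ nbr G v ⊆ A := by
  simp [actStep, deg, card_le_card_inter_iff]

lemma actStep_mono (G : SimpleGraph V) (thr : V → ℕ) {A B : Finset V} (h : A ⊆ B) :
    actStep G thr A ⊆ actStep G thr B := by
  apply Finset.union_subset_union h
  apply Finset.monotone_filter_right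
  intro v _ hv
  exact le_trans hv (Finset.card_le_card (Finset.inter_subset_inter le_rfl h))

lemma subset_actStep (G : SimpleGraph V) (thr : V → ℕ) (A : Finset V) :
    A ⊆ actStep G thr A := Finset.subset_union_left

lemma self_subset_iterate (G : SimpleGraph V) (thr : V → ℕ) (A : Finset V) (m : ℕ) :
    A ⊆ (actStep G thr)^[m] A := by
  induction m generalizing A with
  | zero => simp
  | succ m ih =>
    rw [Function.iterate_succ_apply]
    exact (subset_actStep G thr A).trans (ih _)

lemma iterate_subset_of_fixed (G : SimpleGraph V) (thr : V → ℕ) {S B : Finset V}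
    (hSB : S ⊆ B) (hB : actStep G thr B ⊆ B) (m : ℕ) :
    (actStep G thr)^[m] S ⊆ B := by
  induction m with
  | zero => simpa
  | succ m ih =>
    rw [Function.iterate_succ_apply']
    exact (actStep_mono G thr ih).trans hB

lemma adj_inl_inr_inr (G : SimpleGraph V) (k : ℕ) (v : V) (i : Fin (k+1)) :
    (dksRed G k).Adj (Sum.inl v) (Sum.inr (Sum.inr i)) := by
  rw [dksRed, SimpleGraph.fromRel_adj]
  exact ⟨by simp, Or.inl (Or.inr ⟨i, v, rfl, rfl⟩)⟩

lemma mem_nbr_edge (G : SimpleGraph V) (k : ℕ) (e : G.edgeSet)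
    (x : V ⊕ (G.edgeSet ⊕ Fin (k + 1))) :
    x ∈ nbr (dksRed G k) (Sum.inr (Sum.inl e)) ↔ ∃ v, v ∈ (e : Sym2 V) ∧ x = Sum.inl v := by
  simp only [nbr, Finset.mem_filter, Finset.mem_univ, true_and, dksRed,
    SimpleGraph.fromRel_adj]
  constructor
  · rintro ⟨-, h | h⟩
    · rcases h with ⟨e', v, h1, h2, h3⟩ | ⟨i, v, h1, h2⟩ <;> simp_all
    · rcases h with ⟨e', v, h1, h2, h3⟩ | ⟨i, v, h1, h2⟩
      · cases Sum.inl.inj (Sum.inr.inj h2)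
        exact ⟨v, h3, h1⟩
      · simp_all
  · rintro ⟨v, hv, rfl⟩
    exact ⟨by simp, Or.inr (Or.inl ⟨e, v, rfl, rfl, hv⟩)⟩

lemma edge_image_injective (G : SimpleGraph V) (k : ℕ) :
    Function.Injective
      (fun e : G.edgeSet => (Sum.inr (Sum.inl e) : V ⊕ (G.edgeSet ⊕ Fin (k + 1)))) :=
  fun _ _ h => Sum.inl.inj (Sum.inr.inj h)

lemma card_T (G : SimpleGraph V) (k : ℕ) (U : Finset V) :
    ((Finset.univ.filter fun e : G.edgeSet => ∀ v ∈ (e : Sym2 V), v ∈ U).image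
      (fun e => (Sum.inr (Sum.inl e) : V ⊕ (G.edgeSet ⊕ Fin (k + 1))))).card =
    (G.edgeFinset.filter fun e => ∀ v ∈ e, v ∈ U).card := by
  rw [Finset.card_image_of_injective _ (edge_image_injective G k)]
  refine Finset.card_bij (fun e _ => (e : Sym2 V)) ?_ ?_ ?_
  · rintro ⟨e, he⟩ ha
    simp only [Finset.mem_filter, Finset.mem_univ, true_and] at ha
    exact Finset.mem_filter.mpr ⟨SimpleGraph.mem_edgeFinset.mpr he, ha⟩
  · rintro ⟨e, _⟩ _ ⟨e', _⟩ _ h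
    exact Subtype.ext h
  · intro e he
    rw [Finset.mem_filter] at he
    exact ⟨⟨e, SimpleGraph.mem_edgeFinset.mp he.1⟩,
      Finset.mem_filter.mpr ⟨Finset.mem_univ _, he.2⟩, rfl⟩

theorem stmt13 (G : SimpleGraph V) (k : ℕ) (hk1 : 1 ≤ k) (hk2 : k < Fintype.card V) :
    ((Finset.univ.filter fun S' : Finset (V ⊕ (G.edgeSet ⊕ Fin (k + 1))) =>
        S'.card ≤ k).sup fun S' => (sigmaOp (dksRed G k) (deg (dksRed G k)) S').card) =
    ((Finset.univ.filter fun U : Finset V => U.card ≤ k).sup fun U =>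
      (G.edgeFinset.filter fun e => ∀ v ∈ e, v ∈ U).card) := by
  have hW : Nonempty (V ⊕ (G.edgeSet ⊕ Fin (k + 1))) := ⟨Sum.inr (Sum.inr ⟨0, by omega⟩)⟩
  apply le_antisymm
  · -- LHS ≤ RHS
    apply Finset.sup_le
    intro S' hS'
    rw [Finset.mem_filter] at hS'
    obtain ⟨-, hcard⟩ := hS'
    set U : Finset V := Finset.univ.filter (fun v => Sum.inl v ∈ S') with hUdef
    have hUcard : U.card ≤ k := by
      have h1 : (U.image (Sum.inl : V → V ⊕ (G.edgeSet ⊕ Fin (k + 1)))) ⊆ S' := by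
        intro x hx
        obtain ⟨v, hv, rfl⟩ := Finset.mem_image.mp hx
        exact (Finset.mem_filter.mp hv).2
      calc U.card = (U.image (Sum.inl : V → V ⊕ (G.edgeSet ⊕ Fin (k + 1)))).card :=
            (Finset.card_image_of_injective _ Sum.inl_injective).symm
        _ ≤ S'.card := Finset.card_le_card h1
        _ ≤ k := hcard
    set T := (Finset.univ.filter fun e : G.edgeSet => ∀ v ∈ (e : Sym2 V), v ∈ U).image
      (fun e => (Sum.inr (Sum.inl e) : V ⊕ (G.edgeSet ⊕ Fin (k + 1)))) with hTdef
    obtain ⟨j, hj⟩ : ∃ j : Fin (k + 1), Sum.inr (Sum.inr j) ∉ S' := by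
      by_contra h
      push_neg at h
      have hsub : (Finset.univ.image
          (fun i : Fin (k + 1) =>
            (Sum.inr (Sum.inr i) : V ⊕ (G.edgeSet ⊕ Fin (k + 1))))) ⊆ S' := by
        intro x hx
        obtain ⟨i, -, rfl⟩ := Finset.mem_image.mp hx
        exact h i
      have := Finset.card_le_card hsub
      rw [Finset.card_image_of_injective _
        (fun a b hab => Fin.val_injective (congrArg Fin.val (Sum.inr.inj (Sum.inr.inj hab))))]
        at this
      simp at this
      omega
    obtain ⟨w, hw⟩ : ∃ w : V, Sum.inl w ∉ S' := by
      by_contra h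
      push_neg at h
      have hsub : (Finset.univ.image (Sum.inl : V → V ⊕ (G.edgeSet ⊕ Fin (k + 1)))) ⊆ S' := by
        intro x hx
        obtain ⟨v, -, rfl⟩ := Finset.mem_image.mp hx
        exact h v
      have := Finset.card_le_card hsub
      rw [Finset.card_image_of_injective _ Sum.inl_injective] at this
      simp at this
      omega
    have hfix : actStep (dksRed G k) (deg (dksRed G k)) (S' ∪ T) ⊆ S' ∪ T := by
      intro x hx
      rw [mem_actStep_unanimity] at hx
      rcases hx with hx | hx
      · exact hx
      rcases x with v | e | i
      · exfalso
        have hmem : (Sum.inr (Sum.inr j) : V ⊕ (G.edgeSet ⊕ Fin (k + 1))) ∈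
            nbr (dksRed G k) (Sum.inl v) := by
          simp only [nbr, Finset.mem_filter, Finset.mem_univ, true_and]
          exact adj_inl_inr_inr G k v j
        have := hx hmem
        rcases Finset.mem_union.mp this with h | h
        · exact hj h
        · obtain ⟨e, -, he⟩ := Finset.mem_image.mp h
          exact absurd he (by simp)
      · apply Finset.mem_union_right
        rw [hTdef]
        apply Finset.mem_image.mpr
        refine ⟨e, Finset.mem_filter.mpr ⟨Finset.mem_univ _, fun v hv => ?_⟩, rfl⟩
        have hmem : (Sum.inl v : V ⊕ (G.edgeSet ⊕ Fin (k + 1))) ∈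
            nbr (dksRed G k) (Sum.inr (Sum.inl e)) := (mem_nbr_edge G k e _).mpr ⟨v, hv, rfl⟩
        have := hx hmem
        rcases Finset.mem_union.mp this with h | h
        · exact Finset.mem_filter.mpr ⟨Finset.mem_univ _, h⟩
        · obtain ⟨e', -, he'⟩ := Finset.mem_image.mp h
          exact absurd he' (by simp)
      · exfalso
        have hmem : (Sum.inl w : V ⊕ (G.edgeSet ⊕ Fin (k + 1))) ∈
            nbr (dksRed G k) (Sum.inr (Sum.inr i)) := by
          simp only [nbr, Finset.mem_filter, Finset.mem_univ, true_and]
          exact (adj_inl_inr_inr G k w i).symm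
        have := hx hmem
        rcases Finset.mem_union.mp this with h | h
        · exact hw h
        · obtain ⟨e, -, he⟩ := Finset.mem_image.mp h
          exact absurd he (by simp)
    have hcl : sigmaCl (dksRed G k) (deg (dksRed G k)) S' ⊆ S' ∪ T :=
      iterate_subset_of_fixed _ _ Finset.subset_union_left hfix _
    have hop : sigmaOp (dksRed G k) (deg (dksRed G k)) S' ⊆ T := by
      intro x hx
      unfold sigmaOp at hx
      simp only [Finset.mem_sdiff] at hx
      rcases Finset.mem_union.mp (hcl hx.1) with h | h
      · exact absurd h hx.2
      · exact h
    calc (sigmaOp (dksRed G k) (deg (dksRed G k)) S').card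
        ≤ T.card := Finset.card_le_card hop
      _ = (G.edgeFinset.filter fun e => ∀ v ∈ e, v ∈ U).card := card_T G k U
      _ ≤ _ := Finset.le_sup (f := fun U : Finset V =>
          (G.edgeFinset.filter fun e => ∀ v ∈ e, v ∈ U).card)
          (Finset.mem_filter.mpr ⟨Finset.mem_univ _, hUcard⟩)
  · -- RHS ≤ LHS
    apply Finset.sup_le
    intro U hU
    rw [Finset.mem_filter] at hU
    obtain ⟨-, hUk⟩ := hU
    set S' := U.image (Sum.inl : V → V ⊕ (G.edgeSet ⊕ Fin (k + 1))) with hS'def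
    set T := (Finset.univ.filter fun e : G.edgeSet => ∀ v ∈ (e : Sym2 V), v ∈ U).image
      (fun e => (Sum.inr (Sum.inl e) : V ⊕ (G.edgeSet ⊕ Fin (k + 1)))) with hTdef
    have hS'card : S'.card ≤ k := by
      rw [hS'def, Finset.card_image_of_injective _ Sum.inl_injective]; exact hUk
    obtain ⟨w, hw⟩ : ∃ w : V, w ∉ U := by
      by_contra h
      push_neg at h
      have hsub : (Finset.univ : Finset V) ⊆ U := fun x _ => h x
      have := Finset.card_le_card hsub
      simp at this
      omega
    have hnotS' : ∀ v : V, Sum.inl v ∈ S' → v ∈ U := by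
      intro v hv
      obtain ⟨u, hu, he⟩ := Finset.mem_image.mp hv
      cases Sum.inl.inj he
      exact hu
    have hfix : actStep (dksRed G k) (deg (dksRed G k)) (S' ∪ T) ⊆ S' ∪ T := by
      intro x hx
      rw [mem_actStep_unanimity] at hx
      rcases hx with hx | hx
      · exact hx
      rcases x with v | e | i
      · exfalso
        have hmem : (Sum.inr (Sum.inr ⟨0, by omega⟩) : V ⊕ (G.edgeSet ⊕ Fin (k + 1))) ∈
            nbr (dksRed G k) (Sum.inl v) := by
          simp only [nbr, Finset.mem_filter, Finset.mem_univ, true_and]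
          exact adj_inl_inr_inr G k v _
        have := hx hmem
        rcases Finset.mem_union.mp this with h | h
        · obtain ⟨u, -, hu⟩ := Finset.mem_image.mp h
          exact absurd hu (by simp)
        · obtain ⟨e, -, he⟩ := Finset.mem_image.mp h
          exact absurd he (by simp)
      · apply Finset.mem_union_right
        rw [hTdef]
        apply Finset.mem_image.mpr
        refine ⟨e, Finset.mem_filter.mpr ⟨Finset.mem_univ _, fun v hv => ?_⟩, rfl⟩
        have hmem : (Sum.inl v : V ⊕ (G.edgeSet ⊕ Fin (k + 1))) ∈
            nbr (dksRed G k) (Sum.inr (Sum.inl e)) := (mem_nbr_edge G k e _).mpr ⟨v, hv, rfl⟩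
        have := hx hmem
        rcases Finset.mem_union.mp this with h | h
        · exact hnotS' v h
        · obtain ⟨e', -, he'⟩ := Finset.mem_image.mp h
          exact absurd he' (by simp)
      · exfalso
        have hmem : (Sum.inl w : V ⊕ (G.edgeSet ⊕ Fin (k + 1))) ∈
            nbr (dksRed G k) (Sum.inr (Sum.inr i)) := by
          simp only [nbr, Finset.mem_filter, Finset.mem_univ, true_and]
          exact (adj_inl_inr_inr G k w i).symm
        have := hx hmem
        rcases Finset.mem_union.mp this with h | h
        · exact hw (hnotS' w h)
        · obtain ⟨e, -, he⟩ := Finset.mem_image.mp h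
          exact absurd he (by simp)
    have hTact : T ⊆ actStep (dksRed G k) (deg (dksRed G k)) S' := by
      intro x hx
      rw [hTdef] at hx
      obtain ⟨e, he, rfl⟩ := Finset.mem_image.mp hx
      rw [Finset.mem_filter] at he
      rw [mem_actStep_unanimity]
      right
      intro y hy
      obtain ⟨v, hv, rfl⟩ := (mem_nbr_edge G k e y).mp hy
      exact Finset.mem_image.mpr ⟨v, he.2 v hv, rfl⟩
    have hcl : sigmaCl (dksRed G k) (deg (dksRed G k)) S' = S' ∪ T := by
      apply Finset.Subset.antisymm
      · exact iterate_subset_of_fixed _ _ Finset.subset_union_left hfix _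
      · apply Finset.union_subset (self_subset_iterate _ _ _ _)
        have hpos : 0 < Fintype.card (V ⊕ (G.edgeSet ⊕ Fin (k + 1))) := Fintype.card_pos
        obtain ⟨m, hm⟩ := Nat.exists_eq_succ_of_ne_zero hpos.ne'
        rw [hm, Function.iterate_succ_apply]
        exact hTact.trans (self_subset_iterate _ _ _ _)
    have hop : sigmaOp (dksRed G k) (deg (dksRed G k)) S' = T := by
      unfold sigmaOp
      rw [hcl]
      apply Finset.Subset.antisymm
      · intro x hx
        simp only [Finset.mem_sdiff] at hx
        rcases Finset.mem_union.mp hx.1 with h | h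
        · exact absurd h hx.2
        · exact h
      · intro x hx
        simp only [Finset.mem_sdiff]
        refine ⟨Finset.mem_union_right _ hx, ?_⟩
        intro hxS
        obtain ⟨e, -, he⟩ := Finset.mem_image.mp hx
        obtain ⟨u, -, hu⟩ := Finset.mem_image.mp hxS
        rw [← he] at hu
        exact absurd hu (by simp)
    calc (G.edgeFinset.filter fun e => ∀ v ∈ e, v ∈ U).card
        = (sigmaOp (dksRed G k) (deg (dksRed G k)) S').card := by rw [hop, card_T G k U]
      _ ≤ _ := Finset.le_sup (f := fun S' : Finset (V ⊕ (G.edgeSet ⊕ Fin (k + 1))) =>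
          (sigmaOp (dksRed G k) (deg (dksRed G k)) S').card)
          (Finset.mem_filter.mpr ⟨Finset.mem_univ _, hS'card⟩)
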